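/- Let k be a nontrivial commutative ring and let b = (b_{ij}) and p = (p_{ij}) be 2×2 matrices over k. The matrix S_bc fixes the first standard basis vector e₀ of k⁴ (i.e., S_bc · e₀ = e₀, which expresses the condition S(1) = 1 required by the Milnor–Moore recursive formula for the antipode) if and only if p₁₂ = p₂₁. Consequently, the Milnor–Moore recursion S(x) = ε(x) − x − S(x′₍₁₎)x′₍₂₎ with S(1) = 1 cannot compute the antipode of a Clifford bi-convolution whose coscalar product has a nonzero antisymmetric part. -/
import Mathlib


/-- The (normalized) antipode of the Clifford bi-convolution with scalar product `b`
and coscalar product `p`, as computed by BIGEBRA, in the basis `1, e1, e2, e1∧e2`. -/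
def Sbc {k : Type*} [CommRing k] (b p : Matrix (Fin 2) (Fin 2) k) :
    Matrix (Fin 4) (Fin 4) k :=
  !![1 + (p 0 1 - p 1 0) * (b 0 1 - b 1 0), 0, 0, b 0 1 - b 1 0;
     0, -1, 0, 0;
     0, 0, -1, 0;
     p 0 1 - p 1 0, 0, 0, 1]

/-- **(dim V = 2)** The antipode `S_bc` of a Clifford bi-convolution fixes the first
standard basis vector `e₀` of `k⁴` (the condition `S(1) = 1` required by the
Milnor–Moore recursion for the antipode) if and only if the coscalar product `p`
is symmetric.  Hence the Milnor–Moore recursion cannot compute the antipode when the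
coscalar product has a nonzero antisymmetric part. -/
theorem sbc_fixes_unit_iff_coscalar_symmetric
    (k : Type*) [CommRing k] [Nontrivial k] (b p : Matrix (Fin 2) (Fin 2) k) :
    (Sbc b p).mulVec (Pi.single 0 1) = Pi.single 0 1 ↔ p 0 1 = p 1 0 := by
  constructor
  · intro h
    have h3 := congrFun h 3
    simp [Sbc, Matrix.mulVec, dotProduct, Fin.sum_univ_four, Pi.single_apply] at h3
    exact sub_eq_zero.mp h3
  · intro h
    funext i
    fin_cases i <;>
      simp [Sbc, Matrix.mulVec, dotProduct, Fin.sum_univ_four, Pi.single_apply, h]
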